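/- Let r ≥ 0 and let A be a Hermitian matrix of size 2(r+1) × 2(r+1), with rows and columns indexed by 0,…,2r+1, such that A_{jl} = 0 whenever j + l < 2r+1, A_{jj} = 0 for all j, and A_{j,(2r+1)−j} ≠ 0 for all j (i.e., A vanishes strictly above its main anti-diagonal and on its diagonal, and every entry of the main anti-diagonal is nonzero). Then A has at least r+1 positive eigenvalues and at least r+1 negative eigenvalues (counted with multiplicity); in particular it has exactly r+1 of each. -/

import Mathlib

open Matrix
open scoped ComplexOrder

noncomputable section

lemma keylem {r : ℕ} (A : Matrix (Fin (2 * (r + 1))) (Fin (2 * (r + 1))) ℂ)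
    (hA : A.IsHermitian)
    (hupper : ∀ j l : Fin (2 * (r + 1)), (j : ℕ) + (l : ℕ) < 2 * r + 1 → A j l = 0)
    (ε : ℝ) (S : Finset (Fin (2 * (r + 1)))) (hS : ∀ i ∈ S, 0 < ε * hA.eigenvalues i) :
    S.card ≤ r + 1 := by
  by_contra hcard
  push_neg at hcard
  set V : Matrix (Fin (2 * (r + 1))) (Fin (2 * (r + 1))) ℂ := (hA.eigenvectorUnitary : Matrix (Fin (2 * (r + 1))) (Fin (2 * (r + 1))) ℂ) with hV
  let ext : ({i // i ∈ S} → ℂ) →ₗ[ℂ] (Fin (2 * (r + 1)) → ℂ) :=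
    { toFun := fun c i => if h : i ∈ S then c ⟨i, h⟩ else 0
      map_add' := by intro a b; funext i; by_cases h : i ∈ S <;> simp [h]
      map_smul' := by intro m a; funext i; by_cases h : i ∈ S <;> simp [h] }
  let f : ({i // i ∈ S} → ℂ) →ₗ[ℂ] (Fin (r + 1) → ℂ) :=
    { toFun := fun c j => (V *ᵥ ext c) ⟨r + 1 + (j : ℕ), by omega⟩
      map_add' := by intro a b; funext j; simp [Matrix.mulVec_add]
      map_smul' := by intro m a; funext j; simp [Matrix.mulVec_smul] }
  have hninj : ¬ Function.Injective f := by
    intro h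
    have h2 := LinearMap.finrank_le_finrank_of_injective h
    rw [Module.finrank_fintype_fun_eq_card, Module.finrank_fintype_fun_eq_card,
      Fintype.card_coe, Fintype.card_fin] at h2
    omega
  rw [← LinearMap.ker_eq_bot] at hninj
  obtain ⟨c, hcker, hc0⟩ := Submodule.exists_mem_ne_zero_of_ne_bot hninj
  set y : Fin (2 * (r + 1)) → ℂ := ext c with hy
  set x : Fin (2 * (r + 1)) → ℂ := V *ᵥ y with hx
  have hfc : ∀ j : Fin (r + 1), x ⟨r + 1 + (j : ℕ), by omega⟩ = 0 := by
    intro j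
    have := LinearMap.mem_ker.mp hcker
    exact congrFun this j
  have hxz : ∀ j : Fin (2 * (r + 1)), r + 1 ≤ (j : ℕ) → x j = 0 := by
    intro j hj
    have := hfc ⟨(j : ℕ) - (r + 1), by omega⟩
    convert this using 2
    exact Fin.ext (by simp; omega)
  have hyS : ∀ i ∉ S, y i = 0 := by
    intro i hi
    simp only [hy, ext, LinearMap.coe_mk, AddHom.coe_mk]
    exact dif_neg hi
  have hq0 : star x ⬝ᵥ (A *ᵥ x) = 0 := by
    apply Finset.sum_eq_zero
    intro j _
    by_cases hj : r + 1 ≤ (j : ℕ)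
    · simp [hxz j hj]
    · have hAx : (A *ᵥ x) j = 0 := by
        show (fun j => A j) j ⬝ᵥ x = 0
        apply Finset.sum_eq_zero
        intro l _
        by_cases hl : r + 1 ≤ (l : ℕ)
        · simp [hxz l hl]
        · show A j l * x l = 0
          rw [hupper j l (by omega), zero_mul]
      rw [hAx, mul_zero]
  have hVsV : star V * V = 1 := (Matrix.mem_unitaryGroup_iff').mp hA.eigenvectorUnitary.2
  have hq1 : star x ⬝ᵥ (A *ᵥ x)
      = ∑ i, (hA.eigenvalues i : ℂ) * (star (y i) * y i) := by
    conv_lhs => rw [hx, hA.spectral_theorem, Unitary.conjStarAlgAut_apply]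
    rw [mulVec_mulVec, mul_assoc, mul_assoc, ← hV, hVsV,
      mul_one, ← mulVec_mulVec, star_mulVec, dotProduct_mulVec, vecMul_vecMul,
      ← Matrix.star_eq_conjTranspose, hVsV, vecMul_one]
    simp only [dotProduct, Matrix.mulVec_diagonal, Function.comp_apply, Pi.star_apply]
    refine Finset.sum_congr rfl fun i _ => ?_
    exact mul_left_comm (star (y i)) ((hA.eigenvalues i : ℂ)) (y i)
  have h : ∑ i, (hA.eigenvalues i : ℂ) * (star (y i) * y i) = 0 := hq1.symm.trans hq0
  have h2 : ((∑ i, hA.eigenvalues i * Complex.normSq (y i) : ℝ) : ℂ) = 0 := by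
    push_cast
    rw [← h]
    refine Finset.sum_congr rfl fun i _ => ?_
    rw [Complex.star_def, ← Complex.normSq_eq_conj_mul_self]
  have hre : ∑ i, hA.eigenvalues i * Complex.normSq (y i) = 0 := by exact_mod_cast h2
  have hres : ∑ i ∈ S, ε * hA.eigenvalues i * Complex.normSq (y i) = 0 := by
    have hres0 : ∑ i ∈ S, hA.eigenvalues i * Complex.normSq (y i) = 0 := by
      rw [← hre]
      apply Finset.sum_subset (Finset.subset_univ S)
      intro i _ hi
      rw [hyS i hi]
      simp
    calc ∑ i ∈ S, ε * hA.eigenvalues i * Complex.normSq (y i)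
        = ε * ∑ i ∈ S, hA.eigenvalues i * Complex.normSq (y i) := by
          rw [Finset.mul_sum]; exact Finset.sum_congr rfl fun i _ => by ring
      _ = 0 := by rw [hres0, mul_zero]
  have hterm : ∀ i ∈ S, ε * hA.eigenvalues i * Complex.normSq (y i) = 0 :=
    (Finset.sum_eq_zero_iff_of_nonneg fun i hi =>
      mul_nonneg (le_of_lt (hS i hi)) (Complex.normSq_nonneg _)).mp hres
  obtain ⟨k, hk⟩ := Function.ne_iff.mp hc0
  have hyk : y (k : Fin (2 * (r + 1))) = c k := by
    show (if h : (k : Fin (2 * (r + 1))) ∈ S then c ⟨k, h⟩ else 0) = c k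
    rw [dif_pos k.2]
  have hkz := hterm k k.2
  have hnormsq : Complex.normSq (y (k : Fin (2 * (r + 1)))) = 0 := by
    rcases mul_eq_zero.mp hkz with h'|h'
    · exact absurd h' (ne_of_gt (hS k k.2))
    · exact h'
  have : y (k : Fin (2 * (r + 1))) = 0 := Complex.normSq_eq_zero.mp hnormsq
  rw [hyk] at this
  exact hk (by simpa using this)

/-- a Hermitian `2(r+1) × 2(r+1)` matrix vanishing strictly above its main
anti-diagonal and on its diagonal, with nonzero main anti-diagonal, has at least `r+1`
positive and at least `r+1` negative eigenvalues; in particular exactly `r+1` of each. -/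
theorem stmt14 {r : ℕ} (A : Matrix (Fin (2 * (r + 1))) (Fin (2 * (r + 1))) ℂ)
    (hA : A.IsHermitian)
    (hupper : ∀ j l : Fin (2 * (r + 1)), (j : ℕ) + (l : ℕ) < 2 * r + 1 → A j l = 0)
    (hdiag : ∀ j, A j j = 0)
    (hanti : ∀ j : Fin (2 * (r + 1)), A j ⟨2 * r + 1 - (j : ℕ), by omega⟩ ≠ 0) :
    r + 1 ≤ (Finset.univ.filter fun i => 0 < hA.eigenvalues i).card ∧
    r + 1 ≤ (Finset.univ.filter fun i => hA.eigenvalues i < 0).card ∧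
    (Finset.univ.filter fun i => 0 < hA.eigenvalues i).card = r + 1 ∧
    (Finset.univ.filter fun i => hA.eigenvalues i < 0).card = r + 1 := by
  classical
  have hdet : A.det ≠ 0 := by
    have htri : (A.submatrix (Fin.revPerm : Equiv.Perm (Fin (2 * (r + 1)))) id).BlockTriangular
        id := by
      intro i j hij
      simp only [Matrix.submatrix_apply, id_eq] at *
      apply hupper
      have hrev : ((Fin.revPerm i : Fin (2 * (r + 1))) : ℕ) = 2 * (r + 1) - ((i : ℕ) + 1) := by
        show ((Fin.rev i : Fin (2 * (r + 1))) : ℕ) = _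
        exact Fin.val_rev i
      omega
    have hdet2 := Matrix.det_of_upperTriangular htri
    have hnz : ∀ i : Fin (2 * (r + 1)), A (Fin.revPerm i) i ≠ 0 := by
      intro i h0
      apply hanti i
      have heq : (Fin.revPerm i : Fin (2 * (r + 1)))
          = (⟨2 * r + 1 - (i : ℕ), by omega⟩ : Fin (2 * (r + 1))) := by
        apply Fin.ext
        have hrev : ((Fin.revPerm i : Fin (2 * (r + 1))) : ℕ) = 2 * (r + 1) - ((i : ℕ) + 1) := by
          show ((Fin.rev i : Fin (2 * (r + 1))) : ℕ) = _
          exact Fin.val_rev i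
        simp only [hrev]
        show _ = 2 * r + 1 - (i : ℕ)
        omega
      rw [heq] at h0
      have hsym : A i ⟨2 * r + 1 - (i : ℕ), by omega⟩
          = star (A (⟨2 * r + 1 - (i : ℕ), by omega⟩ : Fin (2 * (r + 1))) i) := by
        conv_lhs => rw [← hA]
        rfl
      rw [hsym, h0, star_zero]
    intro h0
    have : (A.submatrix (Fin.revPerm : Equiv.Perm (Fin (2 * (r + 1)))) id).det = 0 := by
      rw [Matrix.det_permute, h0, mul_zero]
    rw [hdet2] at this
    obtain ⟨i, _, hi⟩ := Finset.prod_eq_zero_iff.mp this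
    exact hnz i (by simpa using hi)
  have hev : ∀ i, hA.eigenvalues i ≠ 0 := by
    intro i h0
    apply hdet
    rw [hA.det_eq_prod_eigenvalues]
    exact Finset.prod_eq_zero (Finset.mem_univ i) (by rw [h0]; simp)
  have hpos := keylem A hA hupper 1 (Finset.univ.filter fun i => 0 < hA.eigenvalues i)
    (fun i hi => by rw [one_mul]; exact (Finset.mem_filter.mp hi).2)
  have hneg := keylem A hA hupper (-1) (Finset.univ.filter fun i => hA.eigenvalues i < 0)
    (fun i hi => by
      have := (Finset.mem_filter.mp hi).2
      nlinarith)
  have hsplit : (Finset.univ.filter fun i => 0 < hA.eigenvalues i).card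
      + (Finset.univ.filter fun i => hA.eigenvalues i < 0).card = 2 * (r + 1) := by
    have hkey := Finset.card_filter_add_card_filter_not (s := (Finset.univ :
      Finset (Fin (2 * (r + 1))))) (p := fun i => 0 < hA.eigenvalues i)
    have hfilter : (Finset.univ.filter fun i => ¬ 0 < hA.eigenvalues i)
        = Finset.univ.filter fun i => hA.eigenvalues i < 0 := by
      apply Finset.filter_congr
      intro i _
      constructor
      · intro h
        exact lt_of_le_of_ne (not_lt.mp h) (hev i)
      · intro h
        exact not_lt.mpr (le_of_lt h)
    rw [hfilter] at hkey
    simpa using hkey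
  refine ⟨by omega, by omega, by omega, by omega⟩
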